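/- Near-term CVaR (discounted CVaR constraint): let C : X → ℝ be bounded measurable, β ∈ (0,1), α ≥ 0, and δ ∈ ℝ. Let μ_γ be the occupation density and assume the cdf of C under the probability measure with density μ_γ (w.r.t. ν) is continuous. If the expected discounted sum of clipped violations satisfies (1−γ) ∑_{t=0}^∞ γ^t ∫_X max(C(x) − α, 0) p_t(x) dν(x) ≤ δ, then CVaR(β, C, μ_γ) ≤ α + (1−β)^{−1} δ. (Paper's Proposition 5.) -/

import Mathlib

open MeasureTheory

/-- The value at risk at level `β` of the cost `h` under the measure `μ`. -/
noncomputable def VaR {X : Type*} [MeasurableSpace X]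
    (β : ℝ) (h : X → ℝ) (μ : Measure X) : ℝ :=
  sInf {a : ℝ | β ≤ (μ {x | h x ≤ a}).toReal}

/-- The conditional value at risk at level `β` of the cost `h` under the measure `μ`. -/
noncomputable def CVaR {X : Type*} [MeasurableSpace X]
    (β : ℝ) (h : X → ℝ) (μ : Measure X) : ℝ :=
  (1 - β)⁻¹ * ∫ x in {x | VaR β h μ ≤ h x}, h x ∂μ


lemma key_lintegral {X : Type*} [MeasurableSpace X] (ν : Measure X)
    (γ : ℝ) (hγ0 : 0 < γ) (hγ1 : γ < 1)
    (p : ℕ → X → ℝ) (M : ℝ)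
    (hmeas : ∀ t, Measurable (p t))
    (hnonneg : ∀ t x, 0 ≤ p t x)
    (hbdd : ∀ t x, p t x ≤ M)
    (hpint : ∀ t, Integrable (p t) ν)
    (h : X → ℝ) (hh : Measurable h) (hh0 : ∀ x, 0 ≤ h x) (K : ℝ) (hK : ∀ x, h x ≤ K) :
    ∫⁻ x, ENNReal.ofReal (h x)
        ∂(ν.withDensity fun x => ENNReal.ofReal ((1 - γ) * ∑' t : ℕ, γ ^ t * p t x))
      = ENNReal.ofReal (1 - γ) *
          ∑' t : ℕ, ENNReal.ofReal (γ ^ t * ∫ x, h x * p t x ∂ν) := by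
  have hγnn : (0:ℝ) ≤ γ := hγ0.le
  have h1γ : (0:ℝ) ≤ 1 - γ := by linarith
  have hsumm : ∀ x, Summable (fun t : ℕ => γ ^ t * p t x) := by
    intro x
    apply Summable.of_nonneg_of_le
      (fun t => mul_nonneg (pow_nonneg hγnn t) (hnonneg t x))
      (fun t => mul_le_mul_of_nonneg_left (hbdd t x) (pow_nonneg hγnn t))
    exact (summable_geometric_of_lt_one hγnn hγ1).mul_right M
  have hfeq : (fun x => ENNReal.ofReal ((1 - γ) * ∑' t : ℕ, γ ^ t * p t x))
      = fun x => ENNReal.ofReal (1 - γ) * ∑' t : ℕ, ENNReal.ofReal (γ ^ t * p t x) := by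
    funext x
    rw [ENNReal.ofReal_mul h1γ, ENNReal.ofReal_tsum_of_nonneg
      (fun t => mul_nonneg (pow_nonneg hγnn t) (hnonneg t x)) (hsumm x)]
  have hmt : ∀ t : ℕ, Measurable fun x => ENNReal.ofReal (γ ^ t * p t x) :=
    fun t => ENNReal.measurable_ofReal.comp ((hmeas t).const_mul _)
  have hf2 : Measurable fun x => ENNReal.ofReal (1 - γ) *
      ∑' t : ℕ, ENNReal.ofReal (γ ^ t * p t x) :=
    (Measurable.ennreal_tsum hmt).const_mul _
  rw [hfeq, lintegral_withDensity_eq_lintegral_mul ν hf2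
    (show Measurable fun x => ENNReal.ofReal (h x) from ENNReal.measurable_ofReal.comp hh)]
  simp only [Pi.mul_apply, Function.comp]
  have step1 : ∀ x, (ENNReal.ofReal (1 - γ) * ∑' t : ℕ, ENNReal.ofReal (γ ^ t * p t x))
      * ENNReal.ofReal (h x)
      = ENNReal.ofReal (1 - γ) *
        ∑' t : ℕ, ENNReal.ofReal (γ ^ t * (h x * p t x)) := by
    intro x
    rw [mul_assoc, ← ENNReal.tsum_mul_right]
    congr 1
    apply tsum_congr
    intro t
    rw [← ENNReal.ofReal_mul (mul_nonneg (pow_nonneg hγnn t) (hnonneg t x))]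
    ring_nf
  simp only [step1]
  rw [lintegral_const_mul _ (Measurable.ennreal_tsum fun t : ℕ =>
      ((show Measurable fun x => γ ^ t * (h x * p t x) from measurable_const.mul (hh.mul (hmeas t))).ennreal_ofReal)),
    lintegral_tsum fun t : ℕ => ((show
      Measurable fun x => γ ^ t * (h x * p t x) from measurable_const.mul (hh.mul (hmeas t))).ennreal_ofReal).aemeasurable]
  congr 1
  apply tsum_congr
  intro t
  have hintg : Integrable (fun x => h x * p t x) ν := by
    apply Integrable.mono' ((hpint t).const_mul K)
      ((hh.mul (hmeas t)).aestronglyMeasurable)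
    filter_upwards with x
    rw [Real.norm_eq_abs, Pi.mul_apply, abs_of_nonneg (mul_nonneg (hh0 x) (hnonneg t x))]
    exact mul_le_mul_of_nonneg_right (hK x) (hnonneg t x)
  have : ∀ x, ENNReal.ofReal (γ ^ t * (h x * p t x))
      = ENNReal.ofReal (γ ^ t) * ENNReal.ofReal (h x * p t x) := fun x =>
    ENNReal.ofReal_mul (pow_nonneg hγnn t)
  simp only [this]
  rw [lintegral_const_mul _ (show Measurable fun x => ENNReal.ofReal (h x * p t x) from (hh.mul (hmeas t)).ennreal_ofReal),
    ← ofReal_integral_eq_lintegral_ofReal hintg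
      (Filter.Eventually.of_forall fun x => mul_nonneg (hh0 x) (hnonneg t x)),
    ← ENNReal.ofReal_mul (pow_nonneg hγnn t)]

/-- **Proposition 5 (near-term CVaR / discounted CVaR constraint).**
If the expected discounted sum of clipped constraint violations is at most `δ`, then the CVaR
of the constraint function `C` under the occupation measure (the measure with density
`μ_γ(x) = (1-γ) ∑ₜ γ^t p_t(x)` w.r.t. `ν`) is at most `α + (1-β)⁻¹ δ`. -/
theorem discounted_cvar_constraint
    {X : Type*} [MeasurableSpace X] (ν : Measure X)
    (γ : ℝ) (hγ : γ ∈ Set.Ioo (0 : ℝ) 1)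
    (p : ℕ → X → ℝ) (M : ℝ)
    (hmeas : ∀ t, Measurable (p t))
    (hnonneg : ∀ t x, 0 ≤ p t x)
    (hbdd : ∀ t x, p t x ≤ M)
    (hint : ∀ t, ∫ x, p t x ∂ν = 1)
    (C : X → ℝ) (hC : Measurable C) (B : ℝ) (hCB : ∀ x, |C x| ≤ B)
    (β : ℝ) (hβ : β ∈ Set.Ioo (0 : ℝ) 1)
    (α : ℝ) (hα : 0 ≤ α) (δ : ℝ)
    (hcdf : Continuous fun a : ℝ =>
      ((ν.withDensity fun x => ENNReal.ofReal ((1 - γ) * ∑' t : ℕ, γ ^ t * p t x))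
        {x | C x ≤ a}).toReal)
    (hsum : (1 - γ) * ∑' t : ℕ, γ ^ t * ∫ x, max (C x - α) 0 * p t x ∂ν ≤ δ) :
    CVaR β C (ν.withDensity fun x => ENNReal.ofReal ((1 - γ) * ∑' t : ℕ, γ ^ t * p t x))
      ≤ α + (1 - β)⁻¹ * δ := by
  obtain ⟨hγ0, hγ1⟩ := hγ
  obtain ⟨hβ0, hβ1⟩ := hβ
  have h1γ : (0:ℝ) ≤ 1 - γ := by linarith
  have h1β : (0:ℝ) < 1 - β := by linarith
  set μ := ν.withDensity fun x => ENNReal.ofReal ((1 - γ) * ∑' t : ℕ, γ ^ t * p t x)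
    with hμdef
  have hpint : ∀ t, Integrable (p t) ν := by
    intro t
    by_contra hni
    have h1 := hint t
    rw [integral_undef hni] at h1
    exact one_ne_zero h1.symm
  have hB : (0:ℝ) ≤ B := by
    rcases isEmpty_or_nonempty X with hE | hN
    · exfalso
      have h1 := hint 0
      rw [integral_of_isEmpty] at h1
      exact one_ne_zero h1.symm
    · exact (abs_nonneg _).trans (hCB hN.some)
  -- μ is a probability measure
  have huniv : μ Set.univ = 1 := by
    have h1 : ∫⁻ x, ENNReal.ofReal ((fun _ : X => (1:ℝ)) x) ∂μ
        = ENNReal.ofReal (1 - γ) *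
          ∑' t : ℕ, ENNReal.ofReal (γ ^ t * ∫ x, (fun _ : X => (1:ℝ)) x * p t x ∂ν) :=
      key_lintegral ν γ hγ0 hγ1 p M hmeas hnonneg hbdd hpint _ measurable_const
        (fun _ => zero_le_one) 1 (fun _ => le_refl 1)
    simp only [one_mul, hint, mul_one, ENNReal.ofReal_one, lintegral_one] at h1
    rw [h1]
    have h2 : ∀ t : ℕ, ENNReal.ofReal (γ ^ t) = ENNReal.ofReal γ ^ t :=
      fun t => ENNReal.ofReal_pow hγ0.le t
    simp only [h2]
    rw [ENNReal.tsum_geometric, show (1 : ENNReal) - ENNReal.ofReal γ = ENNReal.ofReal (1 - γ) by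
      rw [ENNReal.ofReal_sub 1 hγ0.le, ENNReal.ofReal_one]]
    exact ENNReal.mul_inv_cancel (ENNReal.ofReal_pos.mpr (by linarith)).ne'
      ENNReal.ofReal_ne_top
  have hprob : IsProbabilityMeasure μ := ⟨huniv⟩
  -- integrability of C and of the clipped violation g under μ
  have hμC : Integrable C μ := by
    apply Integrable.mono' (integrable_const B) hC.aestronglyMeasurable
    filter_upwards with x
    rw [Real.norm_eq_abs]; exact hCB x
  set g : X → ℝ := fun x => max (C x - α) 0 with hgdef
  have hgmeas : Measurable g := (hC.sub measurable_const).max measurable_const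
  have hg0 : ∀ x, 0 ≤ g x := fun x => le_max_right _ _
  have hgB : ∀ x, g x ≤ B := by
    intro x
    have := (abs_le.mp (hCB x)).2
    exact max_le (by linarith) hB
  have hμg : Integrable g μ := by
    apply Integrable.mono' (integrable_const B) hgmeas.aestronglyMeasurable
    filter_upwards with x
    rw [Real.norm_eq_abs, abs_of_nonneg (hg0 x)]; exact hgB x
  -- ∫ g dμ ≤ δ
  have hgle : ∫ x, g x ∂μ ≤ δ := by
    have h1 : ∫⁻ x, ENNReal.ofReal (g x) ∂μ
        = ENNReal.ofReal (1 - γ) *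
          ∑' t : ℕ, ENNReal.ofReal (γ ^ t * ∫ x, g x * p t x ∂ν) :=
      key_lintegral ν γ hγ0 hγ1 p M hmeas hnonneg hbdd hpint g hgmeas hg0 B hgB
    have hIt0 : ∀ t : ℕ, 0 ≤ ∫ x, g x * p t x ∂ν := fun t =>
      integral_nonneg fun x => mul_nonneg (hg0 x) (hnonneg t x)
    have hItint : ∀ t : ℕ, Integrable (fun x => g x * p t x) ν := by
      intro t
      apply Integrable.mono' ((hpint t).const_mul B)
        (hgmeas.mul (hmeas t)).aestronglyMeasurable
      filter_upwards with x
      rw [Real.norm_eq_abs, Pi.mul_apply, abs_of_nonneg (mul_nonneg (hg0 x) (hnonneg t x))]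
      exact mul_le_mul_of_nonneg_right (hgB x) (hnonneg t x)
    have hItB : ∀ t : ℕ, ∫ x, g x * p t x ∂ν ≤ B := by
      intro t
      calc ∫ x, g x * p t x ∂ν ≤ ∫ x, B * p t x ∂ν := by
            apply integral_mono (hItint t) ((hpint t).const_mul B)
            intro x
            exact mul_le_mul_of_nonneg_right (hgB x) (hnonneg t x)
        _ = B := by rw [integral_const_mul, hint t, mul_one]
    have hsummI : Summable fun t : ℕ => γ ^ t * ∫ x, g x * p t x ∂ν := by
      apply Summable.of_nonneg_of_le
        (fun t => mul_nonneg (pow_nonneg hγ0.le t) (hIt0 t))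
        (fun t => mul_le_mul_of_nonneg_left (hItB t) (pow_nonneg hγ0.le t))
      exact (summable_geometric_of_lt_one hγ0.le hγ1).mul_right B
    rw [← ofReal_integral_eq_lintegral_ofReal hμg
        (Filter.Eventually.of_forall hg0),
      ← ENNReal.ofReal_tsum_of_nonneg
        (fun t => mul_nonneg (pow_nonneg hγ0.le t) (hIt0 t)) hsummI,
      ← ENNReal.ofReal_mul h1γ] at h1
    have heq := (ENNReal.ofReal_eq_ofReal_iff (integral_nonneg hg0)
      (mul_nonneg h1γ (tsum_nonneg fun t =>
        mul_nonneg (pow_nonneg hγ0.le t) (hIt0 t)))).mp h1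
    rw [heq]
    exact hsum
  have hδ0 : (0:ℝ) ≤ δ := le_trans (integral_nonneg hg0) hgle
  -- VaR facts
  set F : ℝ → ℝ := fun a => (μ {x | C x ≤ a}).toReal with hFdef
  set v : ℝ := VaR β C μ with hvdef
  have hvinS : β ≤ F v := by
    have hcl : IsClosed {a : ℝ | β ≤ F a} := isClosed_le continuous_const hcdf
    have hBmem : B ∈ {a : ℝ | β ≤ F a} := by
      have : {x : X | C x ≤ B} = Set.univ := by
        ext x; simp [le_of_abs_le (hCB x)]
      simp only [Set.mem_setOf_eq, hFdef, this, huniv, ENNReal.toReal_one]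
      linarith
    have hbdd' : BddBelow {a : ℝ | β ≤ F a} := by
      refine ⟨-(B+1), fun a ha => ?_⟩
      have hne : μ {x | C x ≤ a} ≠ 0 := by
        intro h0
        simp only [Set.mem_setOf_eq, hFdef, h0, ENNReal.toReal_zero] at ha
        linarith
      obtain ⟨x, hx⟩ := nonempty_of_measure_ne_zero hne
      have := (abs_le.mp (hCB x)).1
      have : -B ≤ C x := by linarith
      have hCa : C x ≤ a := hx
      linarith
    exact hcl.csInf_mem ⟨B, hBmem⟩ hbdd'
  have hlt : β ≤ (μ {x | C x < v}).toReal := by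
    have htend : Filter.Tendsto (fun n : ℕ => F (v - 1/(n+1))) Filter.atTop (nhds (F v)) := by
      apply (hcdf.tendsto v).comp
      have h0 : Filter.Tendsto (fun _ : ℕ => v) Filter.atTop (nhds v) := tendsto_const_nhds
      have := h0.sub tendsto_one_div_add_atTop_nhds_zero_nat
      simpa using this
    refine hvinS.trans (le_of_tendsto htend ?_)
    filter_upwards with n
    apply ENNReal.toReal_mono (measure_ne_top μ _)
    apply measure_mono
    intro x hx
    have hpos : (0:ℝ) < 1/(n+1) := by positivity
    simp only [Set.mem_setOf_eq] at hx ⊢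
    linarith
  have hsmeas : MeasurableSet {x : X | v ≤ C x} := measurableSet_le measurable_const hC
  have hsμ : (μ {x | v ≤ C x}).toReal ≤ 1 - β := by
    have h1 := measure_add_measure_compl (μ := μ) (s := {x : X | C x < v})
      (measurableSet_lt hC measurable_const)
    rw [huniv, show {x : X | C x < v}ᶜ = {x : X | v ≤ C x} by
      ext x; simp [not_lt]] at h1
    have h2 := congrArg ENNReal.toReal h1
    rw [ENNReal.toReal_add (measure_ne_top μ _) (measure_ne_top μ _),
      ENNReal.toReal_one] at h2
    linarith
  -- final computation
  rw [CVaR]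
  have hsint : ∫ x in {x : X | VaR β C μ ≤ C x}, C x ∂μ ≤ δ + (1 - β) * α := by
    calc ∫ x in {x : X | VaR β C μ ≤ C x}, C x ∂μ
        ≤ ∫ x in {x : X | VaR β C μ ≤ C x}, (g x + α) ∂μ := by
          apply setIntegral_mono_on hμC.integrableOn
            (hμg.add (integrable_const α)).integrableOn hsmeas
          intro x _
          show C x ≤ g x + α
          have h2 := le_max_left (C x - α) 0
          simp only [hgdef]
          linarith
      _ = ∫ x in {x : X | VaR β C μ ≤ C x}, g x ∂μ
            + (μ {x : X | v ≤ C x}).toReal * α := by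
          rw [integral_add hμg.integrableOn (integrable_const α).integrableOn,
            setIntegral_const, smul_eq_mul]
          rfl
      _ ≤ δ + (1 - β) * α := by
          apply add_le_add
          · exact le_trans (setIntegral_le_integral hμg
              (Filter.Eventually.of_forall hg0)) hgle
          · exact mul_le_mul_of_nonneg_right hsμ hα
  calc (1 - β)⁻¹ * ∫ x in {x : X | VaR β C μ ≤ C x}, C x ∂μ
      ≤ (1 - β)⁻¹ * (δ + (1 - β) * α) :=
        mul_le_mul_of_nonneg_left hsint (inv_nonneg.mpr h1β.le)
    _ = α + (1 - β)⁻¹ * δ := by field_simp; ring
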